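/- arXiv:2210.16042 — 4 statements merged into one kernel-verified Lean document; each statement's English description precedes it below -/
import Mathlib

section
/- Let V_y = F Σ_β F' + V_ε, where F is a T×k matrix with F'F/T = I_k, Σ_β is a symmetric positive definite k×k matrix, and V_ε is a symmetric positive semidefinite T×T matrix. Let M_F = I_T − (1/T) F F'. Then the columns of (1/√T)F span the eigenspace of V_y associated with its k largest eigenvalues if and only if (1) M_F V_ε F = 0, and (2) δ_k(T Σ_β + (1/T) F' V_ε F) > δ_1(M_F V_ε M_F). -/
open Matrix

noncomputable def delta {ι : Type*} [Fintype ι] [DecidableEq ι] (A : Matrix ι ι ℝ) (j : ℕ) : ℝ :=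
  if hA : A.IsHermitian then
    (Multiset.sort (Finset.univ.val.map hA.eigenvalues) (· ≤ ·)).getD (Fintype.card ι - j) 0
  else 0

/-- with `V_y = F Σ_β F' + V_ε`, the columns of `(1/√T)F` span the
eigenspace of `V_y` associated with its `k` largest eigenvalues (i.e. the range of
`F` is `V_y`-invariant and the eigenvalues of `V_y` on that range, namely those of
`(1/T)F'V_yF`, strictly dominate those on its orthogonal complement, namely those of
`M_F V_y M_F`) if and only if (1) `M_F V_ε F = 0` and
(2) `δ_k(TΣ_β + (1/T)F'V_εF) > δ_1(M_F V_ε M_F)`. -/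
theorem stmt_5 (T k : ℕ) (hk : 0 < k) (hkT : k ≤ T)
    (F : Matrix (Fin T) (Fin k) ℝ) (Sb : Matrix (Fin k) (Fin k) ℝ)
    (Vε : Matrix (Fin T) (Fin T) ℝ)
    (hF : Fᵀ * F = (T : ℝ) • 1)
    (hSb : Sb.PosDef) (hVε : Vε.PosSemidef)
    (Vy : Matrix (Fin T) (Fin T) ℝ) (hVy : Vy = F * Sb * Fᵀ + Vε)
    (MF : Matrix (Fin T) (Fin T) ℝ) (hMF : MF = 1 - (T : ℝ)⁻¹ • (F * Fᵀ)) :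
    ((∃ A : Matrix (Fin k) (Fin k) ℝ, Vy * F = F * A) ∧
        delta ((T : ℝ)⁻¹ • (Fᵀ * Vy * F)) k > delta (MF * Vy * MF) 1) ↔
      (MF * Vε * F = 0 ∧
        delta ((T : ℝ) • Sb + (T : ℝ)⁻¹ • (Fᵀ * Vε * F)) k > delta (MF * Vε * MF) 1) := by
  have hT : (0 : ℝ) < (T : ℝ) := by
    have : 0 < T := lt_of_lt_of_le hk hkT
    exact_mod_cast this
  have hTT : (T : ℝ)⁻¹ * (T : ℝ) = 1 := inv_mul_cancel₀ hT.ne'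
  have hMFF : MF * F = 0 := by
    rw [hMF, Matrix.sub_mul, Matrix.one_mul, Matrix.smul_mul, Matrix.mul_assoc, hF,
      Matrix.mul_smul, Matrix.mul_one, smul_smul, hTT, one_smul, sub_self]
  have hFtMF : Fᵀ * MF = 0 := by
    rw [hMF, Matrix.mul_sub, Matrix.mul_one, Matrix.mul_smul, ← Matrix.mul_assoc, hF,
      Matrix.smul_mul, smul_smul, hTT, one_smul, Matrix.one_mul, sub_self]
  have e1 : (T : ℝ)⁻¹ • (Fᵀ * Vy * F) = (T : ℝ) • Sb + (T : ℝ)⁻¹ • (Fᵀ * Vε * F) := by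
    have h2 : Fᵀ * Vy * F = ((T : ℝ) * (T : ℝ)) • Sb + Fᵀ * Vε * F := by
      rw [hVy, Matrix.mul_add, Matrix.add_mul]
      simp only [← Matrix.mul_assoc]
      rw [Matrix.mul_assoc (Fᵀ * F * Sb) Fᵀ F, hF, Matrix.smul_mul, Matrix.one_mul,
        Matrix.mul_smul, Matrix.mul_one, smul_smul]
    rw [h2, smul_add, smul_smul, ← mul_assoc, hTT, one_mul]
  have e2 : MF * Vy * MF = MF * Vε * MF := by
    rw [hVy, Matrix.mul_add, Matrix.add_mul, ← Matrix.mul_assoc, ← Matrix.mul_assoc, hMFF,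
      Matrix.zero_mul, Matrix.zero_mul, Matrix.zero_mul, zero_add]
  rw [e1, e2]
  refine and_congr ?_ Iff.rfl
  constructor
  · rintro ⟨A, hA⟩
    have h1 : MF * Vε * F = MF * Vy * F - MF * (F * Sb * Fᵀ) * F := by
      rw [hVy, Matrix.mul_add, Matrix.add_mul, add_sub_cancel_left]
    rw [h1, Matrix.mul_assoc MF Vy F, hA, ← Matrix.mul_assoc, hMFF, Matrix.zero_mul,
      ← Matrix.mul_assoc, ← Matrix.mul_assoc, hMFF, Matrix.zero_mul, Matrix.zero_mul, Matrix.zero_mul,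
      sub_self]
  · intro h0
    refine ⟨(T : ℝ) • Sb + (T : ℝ)⁻¹ • (Fᵀ * (Vε * F)), ?_⟩
    have hVF : Vε * F = (T : ℝ)⁻¹ • (F * (Fᵀ * (Vε * F))) := by
      have h := h0
      rw [hMF, Matrix.sub_mul, Matrix.sub_mul, Matrix.one_mul, Matrix.smul_mul,
        Matrix.smul_mul, sub_eq_zero, Matrix.mul_assoc, Matrix.mul_assoc] at h
      exact h
    rw [hVy, Matrix.add_mul, Matrix.mul_assoc (F * Sb) Fᵀ F, hF, Matrix.mul_smul,
      Matrix.mul_one, Matrix.mul_add, Matrix.mul_smul, Matrix.mul_smul]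
    conv_lhs => rw [hVF]
end

section
/- Let Z* be a symmetric 2×2 random matrix with z₁₁, z₂₂ ~ N(0, 2q), z₁₂ ~ N(0, q) independent, and let a ∈ ℝ. Then (δ₁(a e₁e₁' + Z*) − δ₂(a e₁e₁' + Z*))² / (4q) follows a non-central chi-square distribution with 2 degrees of freedom and non-centrality parameter a²/(4q). -/
open Matrix MeasureTheory ProbabilityTheory
open scoped ENNReal NNReal

lemma herm_trace_eq (A : Matrix (Fin 2) (Fin 2) ℝ) (hA : A.IsHermitian) :
    A.trace = hA.eigenvalues 0 + hA.eigenvalues 1 := by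
  have h2 := hA.trace_eq_sum_eigenvalues
  simpa [Fin.sum_univ_two] using h2

lemma herm_det_eq (A : Matrix (Fin 2) (Fin 2) ℝ) (hA : A.IsHermitian) :
    A.det = hA.eigenvalues 0 * hA.eigenvalues 1 := by
  simpa [Fin.prod_univ_two] using hA.det_eq_prod_eigenvalues

lemma sort_pair (A : Matrix (Fin 2) (Fin 2) ℝ) (hA : A.IsHermitian) :
    Multiset.sort (Finset.univ.val.map hA.eigenvalues) (· ≤ ·)
      = [min (hA.eigenvalues 0) (hA.eigenvalues 1), max (hA.eigenvalues 0) (hA.eigenvalues 1)] := by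
  set e := hA.eigenvalues with he
  have hm : (Finset.univ.val.map e)
      = ↑[min (e 0) (e 1), max (e 0) (e 1)] := by
    have h0 : (Finset.univ.val : Multiset (Fin 2)) = (↑([0, 1] : List (Fin 2)) : Multiset (Fin 2)) := rfl
    rw [h0]
    rcases le_total (e 0) (e 1) with h | h
    · simp [min_eq_left h, max_eq_right h]
    · rw [min_eq_right h, max_eq_left h]
      simp only [Multiset.map_coe, List.map_cons, List.map_nil]
      rw [Multiset.coe_eq_coe]
      exact List.Perm.swap _ _ _
  have hperm : (Multiset.sort (Finset.univ.val.map e) (· ≤ ·)).Perm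
      [min (e 0) (e 1), max (e 0) (e 1)] := by
    rw [← Multiset.coe_eq_coe, Multiset.sort_eq, hm]
  have hsorted : List.Pairwise (· ≤ ·) ([min (e 0) (e 1), max (e 0) (e 1)]) := by
    simp [min_le_max]
  exact List.Perm.eq_of_pairwise (fun _ _ _ _ h1 h2 => le_antisymm h1 h2)
    (Multiset.pairwise_sort _ _) hsorted hperm

lemma delta_spacing (A : Matrix (Fin 2) (Fin 2) ℝ) (hA : A.IsHermitian) :
    (delta A 1 - delta A 2) ^ 2 = A.trace ^ 2 - 4 * A.det := by
  have h1 : delta A 1 = max (hA.eigenvalues 0) (hA.eigenvalues 1) := by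
    simp only [delta, dif_pos hA]
    rw [sort_pair A hA]
    norm_num
  have h2 : delta A 2 = min (hA.eigenvalues 0) (hA.eigenvalues 1) := by
    simp only [delta, dif_pos hA]
    rw [sort_pair A hA]
    norm_num
  rw [h1, h2, herm_trace_eq A hA, herm_det_eq A hA]
  rcases le_total (hA.eigenvalues 0) (hA.eigenvalues 1) with h | h
  · rw [min_eq_left h, max_eq_right h]; ring
  · rw [min_eq_right h, max_eq_left h]; ring

lemma gauss_prod_withDensity :
    (gaussianReal 0 1).prod (gaussianReal 0 1)
      = (volume : Measure (ℝ × ℝ)).withDensity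
          (fun p => gaussianPDF 0 1 p.1 * gaussianPDF 0 1 p.2) := by
  have h1 : gaussianReal 0 1 = volume.withDensity (gaussianPDF 0 1) :=
    gaussianReal_of_var_ne_zero 0 one_ne_zero
  refine (Measure.prod_eq (μ := gaussianReal 0 1) (ν := gaussianReal 0 1) fun s t hs ht => ?_)
  rw [withDensity_apply _ (hs.prod ht), Measure.volume_eq_prod, ← Measure.prod_restrict,
    lintegral_prod_mul (measurable_gaussianPDF 0 1).aemeasurable
      (measurable_gaussianPDF 0 1).aemeasurable,
    h1, withDensity_apply _ hs, withDensity_apply _ ht]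

lemma map_withDensity_inv {T : ℝ × ℝ → ℝ × ℝ} (hT : Measurable T)
    (hTv : Measure.map T volume = volume) {f : ℝ × ℝ → ℝ≥0∞} (hf : Measurable f)
    (hfT : ∀ p, f (T p) = f p) :
    Measure.map T (volume.withDensity f) = volume.withDensity f := by
  ext s hs
  rw [Measure.map_apply hT hs, withDensity_apply _ (hT hs), withDensity_apply _ hs]
  have : ∫⁻ x in T ⁻¹' s, f x = ∫⁻ x in T ⁻¹' s, f (T x) := by
    refine lintegral_congr fun x => (hfT x).symm
  rw [this, ← setLIntegral_map hs hf hT, hTv]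

lemma sqrt_two_pos : (0:ℝ) < Real.sqrt 2 := Real.sqrt_pos.mpr (by norm_num)

lemma map_rot_volume :
    Measure.map (fun p : ℝ × ℝ => ((p.1 - p.2) / Real.sqrt 2, (p.1 + p.2) / Real.sqrt 2))
      (volume : Measure (ℝ × ℝ)) = volume := by
  set e : (Fin 2 → ℝ) ≃ᵐ ℝ × ℝ := MeasurableEquiv.finTwoArrow
  have he : MeasurePreserving e volume volume := volume_preserving_finTwoArrow ℝ
  set M2 : Matrix (Fin 2) (Fin 2) ℝ := !![1 / Real.sqrt 2, -(1 / Real.sqrt 2);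
      1 / Real.sqrt 2, 1 / Real.sqrt 2] with hM2
  have hdet : M2.det = 1 := by
    rw [hM2, Matrix.det_fin_two_of]
    have : Real.sqrt 2 * Real.sqrt 2 = 2 := Real.mul_self_sqrt (by norm_num)
    field_simp
    rw [sq, this]; norm_num
  set L := Matrix.toLin' M2 with hL
  have hLdet : LinearMap.det (L : ((Fin 2 → ℝ) →ₗ[ℝ] (Fin 2 → ℝ))) = 1 := by
    rw [hL, LinearMap.det_toLin', hdet]
  have hLvol : Measure.map L volume = volume := by
    rw [Real.map_linearMap_volume_pi_eq_smul_volume_pi (by rw [hLdet]; norm_num), hLdet]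
    simp
  have hLmeas : Measurable L := L.continuous_of_finiteDimensional.measurable
  have hTe : (fun p : ℝ × ℝ => ((p.1 - p.2) / Real.sqrt 2, (p.1 + p.2) / Real.sqrt 2))
      = e ∘ L ∘ e.symm := by
    funext p
    have h2 : (0:ℝ) < Real.sqrt 2 := sqrt_two_pos
    simp only [Function.comp_apply, e, MeasurableEquiv.finTwoArrow, MeasurableEquiv.coe_mk,
      hL, Matrix.toLin'_apply, hM2]
    simp [Matrix.mulVec, dotProduct, Fin.sum_univ_two, finTwoArrowEquiv]
    constructor <;> field_simp <;> ring
  rw [hTe, ← Function.comp_assoc]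
  rw [← Measure.map_map (e.measurable.comp hLmeas) e.symm.measurable,
    ← Measure.map_map e.measurable hLmeas, (he.symm _).map_eq, hLvol, he.map_eq]

lemma gpdf_rot (x y : ℝ) :
    gaussianPDF 0 1 ((x - y) / Real.sqrt 2) * gaussianPDF 0 1 ((x + y) / Real.sqrt 2)
      = gaussianPDF 0 1 x * gaussianPDF 0 1 y := by
  have key : ∀ u v : ℝ, u ^ 2 + v ^ 2 = x ^ 2 + y ^ 2 →
      gaussianPDFReal 0 1 u * gaussianPDFReal 0 1 v
        = gaussianPDFReal 0 1 x * gaussianPDFReal 0 1 y := by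
    intro u v h
    simp only [gaussianPDFReal, sub_zero]
    rw [mul_mul_mul_comm, ← Real.exp_add, mul_mul_mul_comm, ← Real.exp_add]
    congr 1
    rw [← add_div, ← add_div]
    congr 1
    push_cast
    linarith
  have hsq : ((x - y) / Real.sqrt 2) ^ 2 + ((x + y) / Real.sqrt 2) ^ 2 = x ^ 2 + y ^ 2 := by
    have h2 : Real.sqrt 2 ^ 2 = 2 := Real.sq_sqrt (by norm_num)
    rw [div_pow, div_pow, h2]
    ring
  simp only [gaussianPDF]
  rw [← ENNReal.ofReal_mul (gaussianPDFReal_nonneg _ _ _),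
    ← ENNReal.ofReal_mul (gaussianPDFReal_nonneg _ _ _), key _ _ hsq]

lemma map_rot_gauss :
    Measure.map (fun p : ℝ × ℝ => ((p.1 - p.2) / Real.sqrt 2, (p.1 + p.2) / Real.sqrt 2))
      ((gaussianReal 0 1).prod (gaussianReal 0 1))
      = (gaussianReal 0 1).prod (gaussianReal 0 1) := by
  rw [gauss_prod_withDensity]
  refine map_withDensity_inv (by fun_prop) map_rot_volume
    (((measurable_gaussianPDF 0 1).comp measurable_fst).mul
      ((measurable_gaussianPDF 0 1).comp measurable_snd)) fun p => gpdf_rot p.1 p.2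

lemma map_sub_div_gauss :
    Measure.map (fun p : ℝ × ℝ => (p.1 - p.2) / Real.sqrt 2)
      ((gaussianReal 0 1).prod (gaussianReal 0 1)) = gaussianReal 0 1 := by
  have : (fun p : ℝ × ℝ => (p.1 - p.2) / Real.sqrt 2)
      = Prod.fst ∘ (fun p : ℝ × ℝ => ((p.1 - p.2) / Real.sqrt 2, (p.1 + p.2) / Real.sqrt 2)) :=
    rfl
  rw [this, ← Measure.map_map measurable_fst (by fun_prop), map_rot_gauss]
  have := Measure.fst_prod (μ := gaussianReal 0 1) (ν := gaussianReal 0 1)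
  rwa [Measure.fst] at this

noncomputable def ncChiSq2 (l : ℝ) : Measure ℝ :=
  Measure.map (fun p : ℝ × ℝ => (p.1 + Real.sqrt l) ^ 2 + p.2 ^ 2)
    ((gaussianReal 0 1).prod (gaussianReal 0 1))

lemma map_neg_gauss : Measure.map (fun x : ℝ => -x) (gaussianReal 0 1) = gaussianReal 0 1 := by
  have h := gaussianReal_map_const_mul (μ := 0) (v := 1) (-1)
  have h2 : (fun x : ℝ => -x) = ((-1 : ℝ) * ·) := by funext x; ring
  rw [h2, h]
  norm_num

lemma ncChiSq2_of_sq (c : ℝ) :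
    Measure.map (fun p : ℝ × ℝ => (p.1 + c) ^ 2 + p.2 ^ 2)
      ((gaussianReal 0 1).prod (gaussianReal 0 1)) = ncChiSq2 (c ^ 2) := by
  rcases le_or_gt 0 c with hc | hc
  · rw [ncChiSq2, Real.sqrt_sq hc]
  · have hs : Real.sqrt (c ^ 2) = -c := by
      rw [Real.sqrt_sq_eq_abs, abs_of_neg hc]
    rw [ncChiSq2, hs]
    have hneg : Measure.map (Prod.map (fun x : ℝ => -x) (id : ℝ → ℝ))
        ((gaussianReal 0 1).prod (gaussianReal 0 1))
        = (gaussianReal 0 1).prod (gaussianReal 0 1) := by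
      rw [← Measure.map_prod_map _ _ measurable_neg measurable_id, map_neg_gauss,
        Measure.map_id]
    have hcomp : (fun p : ℝ × ℝ => (p.1 + -c) ^ 2 + p.2 ^ 2)
        = (fun p : ℝ × ℝ => (p.1 + c) ^ 2 + p.2 ^ 2) ∘ Prod.map (fun x : ℝ => -x) (id : ℝ → ℝ) := by
      funext p
      simp only [Function.comp_apply, Prod.map, id_eq]
      ring
    rw [hcomp, ← Measure.map_map (by fun_prop) (by fun_prop), hneg]

lemma gauss_scale (v : ℝ≥0) :
    Measure.map ((Real.sqrt v) * ·) (gaussianReal 0 1) = gaussianReal 0 v := by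
  rw [gaussianReal_map_const_mul]
  have hv : (NNReal.mk ((Real.sqrt v) ^ 2) (sq_nonneg _) * 1 : ℝ≥0) = v := by
    ext
    simp [Real.sq_sqrt v.coe_nonneg]
  rw [mul_zero, hv]

/-- for a symmetric 2×2 random matrix with independent entries
`z₁₁, z₂₂ ~ N(0, 2q)`, `z₁₂ ~ N(0, q)` and `a ∈ ℝ`,
`(δ₁(a e₁e₁' + Z*) - δ₂(a e₁e₁' + Z*))² / (4q)` follows a non-central chi-square
distribution with 2 degrees of freedom and non-centrality parameter `a²/(4q)`. -/
theorem stmt_14 {Ω : Type*} [MeasurableSpace Ω] (P0 : Measure Ω) [IsProbabilityMeasure P0]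
    (q : NNReal) (hq : 0 < q) (a : ℝ)
    (z : Fin 3 → Ω → ℝ) (hzmeas : ∀ i, Measurable (z i))
    (hindep : iIndepFun z P0)
    (h11 : Measure.map (z 0) P0 = gaussianReal 0 (2 * q))
    (h22 : Measure.map (z 1) P0 = gaussianReal 0 (2 * q))
    (h12 : Measure.map (z 2) P0 = gaussianReal 0 q)
    (M : Ω → Matrix (Fin 2) (Fin 2) ℝ)
    (hM : M = fun ω => !![z 0 ω + a, z 2 ω; z 2 ω, z 1 ω]) :
    Measure.map (fun ω => (delta (M ω) 1 - delta (M ω) 2) ^ 2 / (4 * (q : ℝ))) P0 =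
      ncChiSq2 (a ^ 2 / (4 * (q : ℝ))) := by
  have hq0 : (0:ℝ) < (q:ℝ) := hq
  have hsq : Real.sqrt q ^ 2 = (q:ℝ) := Real.sq_sqrt hq0.le
  have hsqpos : (0:ℝ) < Real.sqrt q := Real.sqrt_pos.mpr hq0
  have hsqne : Real.sqrt q ≠ 0 := hsqpos.ne'
  have h2 : Real.sqrt 2 * Real.sqrt 2 = 2 := Real.mul_self_sqrt (by norm_num)
  have h2ne : Real.sqrt 2 ≠ 0 := sqrt_two_pos.ne'
  set g1 : ℝ × ℝ → ℝ := fun p => (p.1 - p.2) / (2 * Real.sqrt q) with hg1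
  set g2 : ℝ → ℝ := fun x => (Real.sqrt q)⁻¹ * x with hg2
  have hg1m : Measurable g1 := by fun_prop
  have hg2m : Measurable g2 := by fun_prop
  set U : Ω → ℝ := g1 ∘ (fun ω => (z 0 ω, z 1 ω)) with hU
  set V : Ω → ℝ := g2 ∘ (z 2) with hV
  set cc : ℝ := a / (2 * Real.sqrt q) with hcc
  -- Step A: pointwise identity
  have hpoint : (fun ω => (delta (M ω) 1 - delta (M ω) 2) ^ 2 / (4 * (q : ℝ)))
      = (fun p : ℝ × ℝ => (p.1 + cc) ^ 2 + p.2 ^ 2) ∘ (fun ω => (U ω, V ω)) := by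
    funext ω
    have hHerm : (!![z 0 ω + a, z 2 ω; z 2 ω, z 1 ω]).IsHermitian := by
      rw [Matrix.IsHermitian]
      ext i j
      fin_cases i <;> fin_cases j <;> simp [Matrix.conjTranspose_apply]
    rw [hM]
    simp only
    rw [delta_spacing _ hHerm]
    simp only [Matrix.trace_fin_two_of, Matrix.det_fin_two_of, Function.comp_apply, hU, hV,
      hg1, hg2, hcc]
    rw [show (4 * (q:ℝ)) = 4 * Real.sqrt q ^ 2 by rw [hsq]]
    field_simp
    ring
  -- Step B: joint law of (U, V)
  have hUm : Measurable U := hg1m.comp ((hzmeas 0).prodMk (hzmeas 1))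
  have hVm : Measurable V := hg2m.comp (hzmeas 2)
  have hindepUV : IndepFun U V P0 :=
    (hindep.indepFun_prodMk hzmeas 0 1 2 (by decide) (by decide)).comp hg1m hg2m
  have hmapU : Measure.map U P0 = gaussianReal 0 1 := by
    rw [hU, ← Measure.map_map hg1m ((hzmeas 0).prodMk (hzmeas 1))]
    have hpair : Measure.map (fun ω => (z 0 ω, z 1 ω)) P0
        = (gaussianReal 0 (2 * q)).prod (gaussianReal 0 (2 * q)) := by
      rw [(indepFun_iff_map_prod_eq_prod_map_map (hzmeas 0).aemeasurable
        (hzmeas 1).aemeasurable).mp (hindep.indepFun (show (0 : Fin 3) ≠ 1 by decide)),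
        h11, h22]
    rw [hpair, ← gauss_scale (2 * q),
      Measure.map_prod_map _ _ (measurable_const_mul _) (measurable_const_mul _),
      Measure.map_map hg1m (by fun_prop)]
    have hcompose : g1 ∘ Prod.map (fun x => Real.sqrt ((2 * q : ℝ≥0) : ℝ) * x)
          (fun x => Real.sqrt ((2 * q : ℝ≥0) : ℝ) * x)
        = fun p : ℝ × ℝ => (p.1 - p.2) / Real.sqrt 2 := by
      funext p
      have hs2q : Real.sqrt ((2 * q : ℝ≥0) : ℝ) = Real.sqrt 2 * Real.sqrt q := by
        push_cast
        rw [Real.sqrt_mul (by norm_num)]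
      simp only [Function.comp_apply, Prod.map, hg1, hs2q]
      field_simp
      linear_combination (p.1 - p.2) * h2
    rw [hcompose, map_sub_div_gauss]
  have hmapV : Measure.map V P0 = gaussianReal 0 1 := by
    rw [hV, ← Measure.map_map hg2m (hzmeas 2), h12, hg2, gaussianReal_map_const_mul]
    have hv : (NNReal.mk (((Real.sqrt q)⁻¹) ^ 2) (sq_nonneg _) * q : ℝ≥0) = 1 := by
      ext
      push_cast
      rw [inv_pow, hsq]
      field_simp
    rw [mul_zero, hv]
  have hjoint : Measure.map (fun ω => (U ω, V ω)) P0
      = (gaussianReal 0 1).prod (gaussianReal 0 1) := by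
    rw [(indepFun_iff_map_prod_eq_prod_map_map hUm.aemeasurable hVm.aemeasurable).mp hindepUV,
      hmapU, hmapV]
  -- Step C: conclude
  have hccsq : cc ^ 2 = a ^ 2 / (4 * (q:ℝ)) := by
    rw [hcc, div_pow]
    congr 1
    rw [mul_pow, hsq]
    norm_num
  rw [hpoint, ← Measure.map_map (by fun_prop) (hUm.prodMk hVm), hjoint, ncChiSq2_of_sq, hccsq]
end

section
/- Let (s₁, s₂) have joint density ℓ(s₁, s₂) = (1/(4√(6π))) exp(−(s₁² + s₂² + s₁s₂)/6) s₁ s₂ (s₁ + s₂) on [0,∞)². Then the ratio r = s₁/s₂ has probability density g₃(r) = (27/8) (r + r²)/(1 + r + r²)^{5/2} for r ≥ 0. In particular g₃ integrates to 1. -/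
open MeasureTheory ProbabilityTheory
open Real Set
open scoped ENNReal

lemma gamma52 : Real.Gamma ((5:ℝ)/2) = 3/4 * Real.sqrt Real.pi := by
  have h1 : ((5:ℝ)/2) = (3:ℝ)/2 + 1 := by norm_num
  have h2 : ((3:ℝ)/2) = (1:ℝ)/2 + 1 := by norm_num
  rw [h1, Real.Gamma_add_one (by norm_num), h2, Real.Gamma_add_one (by norm_num),
    Real.Gamma_one_half_eq]
  ring

lemma gammaint {b : ℝ} (hb : 0 < b) :
    ∫ y in Ioi (0:ℝ), y ^ ((3:ℝ)/2) * Real.exp (-(b * y)) =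
      b ^ (-(5:ℝ)/2) * Real.Gamma ((5:ℝ)/2) := by
  have key := integral_comp_mul_left_Ioi (fun u => u ^ ((3:ℝ)/2) * Real.exp (-u)) 0 hb
  simp only [mul_zero] at key
  have hgamma : Real.Gamma ((5:ℝ)/2) = ∫ u in Ioi (0:ℝ), u ^ ((3:ℝ)/2) * Real.exp (-u) := by
    rw [Real.Gamma_eq_integral (by norm_num)]
    refine setIntegral_congr_fun measurableSet_Ioi fun x hx => ?_
    rw [mul_comm]; norm_num
  have hL : ∀ x ∈ Ioi (0:ℝ), (fun u => u ^ ((3:ℝ)/2) * Real.exp (-u)) (b * x)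
      = b ^ ((3:ℝ)/2) * (x ^ ((3:ℝ)/2) * Real.exp (-(b * x))) := by
    intro x hx
    simp only
    rw [Real.mul_rpow hb.le (le_of_lt hx)]
    ring
  rw [setIntegral_congr_fun measurableSet_Ioi hL, integral_const_mul] at key
  have hbp : (0:ℝ) < b ^ ((3:ℝ)/2) := rpow_pos_of_pos hb _
  have : ∫ x in Ioi (0:ℝ), x ^ ((3:ℝ)/2) * Real.exp (-(b * x)) =
      (b ^ ((3:ℝ)/2))⁻¹ * (b⁻¹ * Real.Gamma ((5:ℝ)/2)) := by
    rw [hgamma]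
    rw [smul_eq_mul] at key
    field_simp at key ⊢
    linarith [key]
  rw [this, ← Real.rpow_neg_one b, ← Real.rpow_neg hb.le, ← mul_assoc, ← Real.rpow_add hb]
  norm_num

lemma momint {b : ℝ} (hb : 0 < b) :
    ∫ x in Ioi (0:ℝ), x ^ 4 * Real.exp (-(b * x ^ 2)) =
      3/8 * Real.sqrt Real.pi * b ^ (-(5:ℝ)/2) := by
  have key := integral_comp_rpow_Ioi_of_pos (p := 2)
    (g := fun y => (1/2) * (y ^ ((3:ℝ)/2) * Real.exp (-(b * y)))) (by norm_num)
  have hL : ∀ x ∈ Ioi (0:ℝ),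
      (2 * x ^ ((2:ℝ) - 1)) • ((1/2) * ((x ^ (2:ℝ)) ^ ((3:ℝ)/2) * Real.exp (-(b * x ^ (2:ℝ)))))
        = x ^ 4 * Real.exp (-(b * x ^ 2)) := by
    intro x hx
    have hx0 : (0:ℝ) ≤ x := le_of_lt hx
    have e2 : (x ^ (2:ℝ)) ^ ((3:ℝ)/2) = x ^ (3:ℕ) := by
      rw [← Real.rpow_natCast x 3, ← Real.rpow_mul hx0]
      norm_num
    have e3 : x ^ (2:ℝ) = x ^ (2:ℕ) := by
      rw [← Real.rpow_natCast x 2]; norm_num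
    have e1 : x ^ ((2:ℝ) - 1) = x := by
      norm_num
    rw [e2, e3, e1, smul_eq_mul]
    ring
  rw [setIntegral_congr_fun measurableSet_Ioi hL] at key
  rw [key]
  rw [integral_const_mul, gammaint hb, gamma52]
  ring

noncomputable def goeL (p : ℝ × ℝ) : ℝ :=
  if 0 ≤ p.1 ∧ 0 ≤ p.2 then
    (1 / (4 * Real.sqrt (6 * Real.pi))) *
      Real.exp (-(p.1 ^ 2 + p.2 ^ 2 + p.1 * p.2) / 6) *
      (p.1 * p.2 * (p.1 + p.2))
  else 0

noncomputable def goeG (r : ℝ) : ℝ :=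
  if 0 ≤ r then 27 / 8 * (r + r ^ 2) / (1 + r + r ^ 2) ^ ((5 : ℝ) / 2) else 0

lemma goeL_meas : Measurable goeL := by
  unfold goeL
  refine Measurable.ite ?_ (by fun_prop) measurable_const
  exact (measurableSet_le measurable_const measurable_fst).inter
    (measurableSet_le measurable_const measurable_snd)

lemma goeG_meas : Measurable goeG := by
  unfold goeG
  exact Measurable.ite measurableSet_Ici (by fun_prop) measurable_const

lemma goeL_zero_of_nonpos {x y : ℝ} (hy : y ≤ 0) : y * goeL (x, y) = 0 := by
  rcases eq_or_lt_of_le hy with h | h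
  · subst h; simp
  · unfold goeL
    rw [if_neg (by push_neg; intro _; simpa using h), mul_zero]

lemma coeff_calc {r : ℝ} (hr : 0 ≤ r) :
    1 / (4 * Real.sqrt (6 * Real.pi)) * (r * (1 + r)) *
        (3 / 8 * Real.sqrt Real.pi * ((1 + r + r ^ 2) / 6) ^ (-(5 : ℝ) / 2)) =
      27 / 8 * (r + r ^ 2) / (1 + r + r ^ 2) ^ ((5 : ℝ) / 2) := by
  have ha : (0:ℝ) < 1 + r + r ^ 2 := by positivity
  have hsq : Real.sqrt (6 * Real.pi) = Real.sqrt 6 * Real.sqrt Real.pi :=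
    Real.sqrt_mul (by norm_num) _
  have h6 : (0:ℝ) < Real.sqrt 6 := Real.sqrt_pos.2 (by norm_num)
  have hπ : (0:ℝ) < Real.sqrt Real.pi := Real.sqrt_pos.2 Real.pi_pos
  have hA : (0:ℝ) < (1 + r + r ^ 2) ^ ((5:ℝ)/2) := Real.rpow_pos_of_pos ha _
  have hneg : (-(5:ℝ)/2) = -((5:ℝ)/2) := by norm_num
  have hdiv : ((1 + r + r ^ 2) / 6 : ℝ) ^ (-(5 : ℝ) / 2)
      = ((1 + r + r ^ 2) ^ ((5:ℝ)/2))⁻¹ * ((6:ℝ) ^ ((5:ℝ)/2)) := by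
    rw [hneg, Real.div_rpow ha.le (by norm_num : (0:ℝ) ≤ 6),
      Real.rpow_neg (by positivity), Real.rpow_neg (by norm_num : (0:ℝ) ≤ 6),
      div_inv_eq_mul]
  have h652 : (6:ℝ) ^ ((5:ℝ)/2) = 36 * Real.sqrt 6 := by
    rw [show ((5:ℝ)/2) = ((2:ℕ):ℝ) + (1:ℝ)/2 by norm_num,
      Real.rpow_add (by norm_num : (0:ℝ) < 6), Real.rpow_natCast,
      ← Real.sqrt_eq_rpow]
    norm_num
  rw [hdiv, hsq, h652]
  have hs6 : Real.sqrt 6 * Real.sqrt 6 = 6 := Real.mul_self_sqrt (by norm_num)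
  field_simp
  nlinarith [hs6, hA, hπ, h6, mul_pos hA hπ]

lemma claimB (r : ℝ) :
    ∫⁻ y : ℝ, ENNReal.ofReal (y * goeL (y * r, y)) = ENNReal.ofReal (goeG r) := by
  have hind : (fun y : ℝ => ENNReal.ofReal (y * goeL (y * r, y)))
      = (Ioi (0:ℝ)).indicator (fun y => ENNReal.ofReal (y * goeL (y * r, y))) := by
    funext y
    by_cases hy : y ∈ Ioi (0:ℝ)
    · rw [Set.indicator_of_mem hy]
    · rw [Set.indicator_of_notMem hy, goeL_zero_of_nonpos (by simpa using hy),
        ENNReal.ofReal_zero]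
  rw [hind, lintegral_indicator measurableSet_Ioi]
  by_cases hr : 0 ≤ r
  · have ha : (0:ℝ) < (1 + r + r ^ 2) / 6 := by positivity
    set b := (1 + r + r ^ 2) / 6 with hb
    set D := 1 / (4 * Real.sqrt (6 * Real.pi)) * (r * (1 + r)) with hD
    have hval : ∀ y ∈ Ioi (0:ℝ),
        ENNReal.ofReal (y * goeL (y * r, y))
          = ENNReal.ofReal (D * (y ^ 4 * Real.exp (-(b * y ^ 2)))) := by
      intro y hy
      have hy0 : (0:ℝ) < y := hy
      congr 1
      unfold goeL
      rw [if_pos ⟨mul_nonneg hy0.le hr, hy0.le⟩]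
      rw [show (-((y*r) ^ 2 + y ^ 2 + (y*r) * y) / 6) = -(b * y ^ 2) by rw [hb]; ring]
      rw [hD]; ring
    rw [setLIntegral_congr_fun measurableSet_Ioi hval]
    have hnn : 0 ≤ᵐ[volume.restrict (Ioi (0:ℝ))]
        fun y => D * (y ^ 4 * Real.exp (-(b * y ^ 2))) := by
      filter_upwards [ae_restrict_mem measurableSet_Ioi] with y hy
      have : (0:ℝ) ≤ D := by
        rw [hD]; positivity
      positivity
    have hint : IntegrableOn (fun y => D * (y ^ 4 * Real.exp (-(b * y ^ 2)))) (Ioi 0) := by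
      apply Integrable.const_mul
      have := integrableOn_rpow_mul_exp_neg_mul_sq ha (s := 4) (by norm_num)
      refine this.congr_fun (fun y hy => ?_) measurableSet_Ioi
      dsimp only
      rw [← Real.rpow_natCast y 4, neg_mul]
      norm_num
    rw [← ofReal_integral_eq_lintegral_ofReal hint hnn, integral_const_mul, momint ha,
      show goeG r = 27 / 8 * (r + r ^ 2) / (1 + r + r ^ 2) ^ ((5 : ℝ) / 2) from if_pos hr]
    rw [hD, hb]
    rw [coeff_calc hr]
  · have hz : ∀ y ∈ Ioi (0:ℝ), ENNReal.ofReal (y * goeL (y * r, y)) = 0 := by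
      intro y hy
      have : goeL (y * r, y) = 0 := by
        unfold goeL
        rw [if_neg]
        push_neg
        intro h
        simp only at h
        have hy0 : (0:ℝ) < y := hy
        exact absurd (by nlinarith : (0:ℝ) ≤ r) hr
      rw [this, mul_zero, ENNReal.ofReal_zero]
    rw [setLIntegral_congr_fun measurableSet_Ioi hz,
      lintegral_zero, show goeG r = 0 from if_neg hr, ENNReal.ofReal_zero]

lemma goeL_zero_snd {x y : ℝ} (hy : y ≤ 0) : goeL (x, y) = 0 := by
  rcases eq_or_lt_of_le hy with h | h
  · subst h; simp [goeL]
  · unfold goeL; rw [if_neg (by push_neg; intro _; simpa using h)]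

lemma mapdiv (s : Set ℝ) (hs : MeasurableSet s) :
    (volume.withDensity fun p => ENNReal.ofReal (goeL p))
        ((fun p : ℝ × ℝ => p.1 / p.2) ⁻¹' s)
      = ∫⁻ r in s, ENNReal.ofReal (goeG r) := by
  have hq : Measurable fun p : ℝ × ℝ => p.1 / p.2 := measurable_fst.div measurable_snd
  set F : ℝ × ℝ → ℝ≥0∞ :=
    fun p => ENNReal.ofReal (goeL p) * s.indicator (fun _ => (1 : ℝ≥0∞)) (p.1 / p.2) with hF
  have hFmeas : Measurable F :=
    (ENNReal.measurable_ofReal.comp goeL_meas).mul ((measurable_const.indicator hs).comp hq)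
  have step0 : (volume.withDensity fun p => ENNReal.ofReal (goeL p))
      ((fun p : ℝ × ℝ => p.1 / p.2) ⁻¹' s) = ∫⁻ p, F p := by
    rw [withDensity_apply _ (hq hs), ← lintegral_indicator (hq hs)]
    congr 1
    funext p
    by_cases h : p.1 / p.2 ∈ s
    · rw [Set.indicator_of_mem (by exact h) (fun p : ℝ×ℝ => ENNReal.ofReal (goeL p)), hF]
      simp only [Set.indicator_of_mem h, mul_one]
    · rw [Set.indicator_of_notMem (by exact h) (fun p : ℝ×ℝ => ENNReal.ofReal (goeL p)), hF]
      simp only [Set.indicator_of_notMem h, mul_zero]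
  set K : ℝ → ℝ → ℝ≥0∞ :=
    fun y r => ENNReal.ofReal (y * goeL (y * r, y)) * s.indicator (fun _ => (1:ℝ≥0∞)) r with hK
  have hKmeas : Measurable (Function.uncurry K) := by
    apply Measurable.mul
    · exact (measurable_fst.mul (goeL_meas.comp
        ((measurable_fst.mul measurable_snd).prodMk measurable_fst))).ennreal_ofReal
    · exact (measurable_const.indicator hs).comp measurable_snd
  have claimA : ∀ y : ℝ, (∫⁻ x, F (x, y)) = ∫⁻ r, K y r := by
    intro y
    by_cases hy : 0 < y
    · have h0 : (volume : Measure ℝ)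
          = ENNReal.ofReal |y| • Measure.map (y * ·) volume :=
        (Real.smul_map_volume_mul_left (ne_of_gt hy)).symm
      have hFy : Measurable fun x => F (x, y) := hFmeas.comp measurable_prodMk_right
      conv_lhs => rw [h0]
      have hmeas2 : Measurable fun a : ℝ => F (y * a, y) := hFy.comp (measurable_const_mul y)
      rw [lintegral_smul_measure, lintegral_map hFy (measurable_const_mul y),
        abs_of_pos hy, smul_eq_mul, ← lintegral_const_mul _ hmeas2]
      congr 1
      funext r
      rw [hK, hF]
      simp only
      rw [mul_div_cancel_left₀ r (ne_of_gt hy), ENNReal.ofReal_mul hy.le, mul_assoc]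
    · push_neg at hy
      have h1 : ∀ x : ℝ, F (x, y) = 0 := by
        intro x
        rw [hF]
        simp only [goeL_zero_snd hy, ENNReal.ofReal_zero, zero_mul]
      have h2 : ∀ r : ℝ, K y r = 0 := by
        intro r
        rw [hK]
        simp only [goeL_zero_of_nonpos hy, ENNReal.ofReal_zero, zero_mul]
      simp only [h1, h2, lintegral_zero]
  have step1 : ∫⁻ p, F p = ∫⁻ y, ∫⁻ x, F (x, y) := by
    rw [show (volume : Measure (ℝ × ℝ)) = (volume : Measure ℝ).prod volume from rfl,
      lintegral_prod_symm F hFmeas.aemeasurable]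
  have step2 : (∫⁻ y, ∫⁻ x, F (x, y)) = ∫⁻ y, ∫⁻ r, K y r := by
    simp only [claimA]
  have step3 : (∫⁻ y, ∫⁻ r, K y r) = ∫⁻ r, ∫⁻ y, K y r := by
    exact lintegral_lintegral_swap hKmeas.aemeasurable
  have step4 : (∫⁻ r, ∫⁻ y, K y r) = ∫⁻ r, s.indicator (fun r => ENNReal.ofReal (goeG r)) r := by
    congr 1
    funext r
    rw [hK]
    simp only
    by_cases hrs : r ∈ s
    · rw [Set.indicator_of_mem hrs, Set.indicator_of_mem hrs]
      simp only [mul_one]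
      exact claimB r
    · rw [Set.indicator_of_notMem hrs, Set.indicator_of_notMem hrs]
      simp only [mul_zero, lintegral_zero]
  rw [step0, step1, step2, step3, step4, lintegral_indicator hs]

lemma mapcore : Measure.map (fun p : ℝ × ℝ => p.1 / p.2)
      (volume.withDensity fun p => ENNReal.ofReal (goeL p))
    = volume.withDensity fun r => ENNReal.ofReal (goeG r) := by
  refine Measure.ext fun s hs => ?_
  rw [Measure.map_apply (show Measurable fun p : ℝ × ℝ => p.1 / p.2 from measurable_fst.div measurable_snd) hs, withDensity_apply _ hs,
    mapdiv s hs]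


theorem stmt_16 {Ω : Type*} [MeasurableSpace Ω] (P0 : Measure Ω) [IsProbabilityMeasure P0]
    (S : Ω → ℝ × ℝ) (hSmeas : Measurable S)
    (hlaw : Measure.map S P0 =
      (volume : Measure (ℝ × ℝ)).withDensity
        (fun p => ENNReal.ofReal
          (if 0 ≤ p.1 ∧ 0 ≤ p.2 then
            (1 / (4 * Real.sqrt (6 * Real.pi))) *
              Real.exp (-(p.1 ^ 2 + p.2 ^ 2 + p.1 * p.2) / 6) *
              (p.1 * p.2 * (p.1 + p.2))
          else 0))) :
    Measure.map (fun ω => (S ω).1 / (S ω).2) P0 =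
      (volume : Measure ℝ).withDensity
        (fun r => ENNReal.ofReal
          (if 0 ≤ r then 27 / 8 * (r + r ^ 2) / (1 + r + r ^ 2) ^ ((5 : ℝ) / 2) else 0)) ∧
      ∫ r in Set.Ici (0 : ℝ), 27 / 8 * (r + r ^ 2) / (1 + r + r ^ 2) ^ ((5 : ℝ) / 2) = 1 := by
  have hq : Measurable fun p : ℝ × ℝ => p.1 / p.2 := measurable_fst.div measurable_snd
  have hL' : (fun p : ℝ × ℝ => ENNReal.ofReal
      (if 0 ≤ p.1 ∧ 0 ≤ p.2 then
        (1 / (4 * Real.sqrt (6 * Real.pi))) *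
          Real.exp (-(p.1 ^ 2 + p.2 ^ 2 + p.1 * p.2) / 6) *
          (p.1 * p.2 * (p.1 + p.2))
      else 0)) = fun p => ENNReal.ofReal (goeL p) := rfl
  have hG' : (fun r : ℝ => ENNReal.ofReal
      (if 0 ≤ r then 27 / 8 * (r + r ^ 2) / (1 + r + r ^ 2) ^ ((5 : ℝ) / 2) else 0))
      = fun r => ENNReal.ofReal (goeG r) := rfl
  have hmap : Measure.map (fun ω => (S ω).1 / (S ω).2) P0
      = volume.withDensity fun r => ENNReal.ofReal (goeG r) := by
    have hcomp : (fun ω => (S ω).1 / (S ω).2) = (fun p : ℝ × ℝ => p.1 / p.2) ∘ S := rfl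
    rw [hcomp, ← Measure.map_map hq hSmeas, hlaw, hL', mapcore]
  refine ⟨by rw [hmap, hG'], ?_⟩
  -- total mass
  have huniv : (volume.withDensity fun r => ENNReal.ofReal (goeG r)) Set.univ = 1 := by
    have hf : Measurable fun ω => (S ω).1 / (S ω).2 := hq.comp hSmeas
    rw [← hmap, Measure.map_apply hf MeasurableSet.univ]
    simp
  have hlint : ∫⁻ r in Set.Ici (0:ℝ), ENNReal.ofReal
      (27 / 8 * (r + r ^ 2) / (1 + r + r ^ 2) ^ ((5 : ℝ) / 2)) = 1 := by
    rw [withDensity_apply _ MeasurableSet.univ, Measure.restrict_univ] at huniv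
    rw [← huniv]
    have : (fun r => ENNReal.ofReal (goeG r)) = (Set.Ici (0:ℝ)).indicator
        (fun r => ENNReal.ofReal
          (27 / 8 * (r + r ^ 2) / (1 + r + r ^ 2) ^ ((5 : ℝ) / 2))) := by
      funext r
      by_cases hr : (0:ℝ) ≤ r
      · rw [Set.indicator_of_mem (show r ∈ Set.Ici (0:ℝ) from hr),
          show goeG r = _ from if_pos hr]
      · rw [Set.indicator_of_notMem (show r ∉ Set.Ici (0:ℝ) by simpa using hr),
          show goeG r = 0 from if_neg hr, ENNReal.ofReal_zero]
    rw [this, lintegral_indicator measurableSet_Ici]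
  have hnn : 0 ≤ᵐ[volume.restrict (Set.Ici (0:ℝ))]
      fun r => 27 / 8 * (r + r ^ 2) / (1 + r + r ^ 2) ^ ((5 : ℝ) / 2) := by
    filter_upwards [ae_restrict_mem measurableSet_Ici] with r hr
    have hr0 : (0:ℝ) ≤ r := hr
    have h1 : (0:ℝ) ≤ 27 / 8 * (r + r ^ 2) := by positivity
    have h2 : (0:ℝ) ≤ (1 + r + r ^ 2) ^ ((5:ℝ)/2) := Real.rpow_nonneg (by positivity) _
    exact div_nonneg h1 h2
  have hmeas : AEStronglyMeasurable
      (fun r : ℝ => 27 / 8 * (r + r ^ 2) / (1 + r + r ^ 2) ^ ((5 : ℝ) / 2))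
      (volume.restrict (Set.Ici (0:ℝ))) := by
    apply Measurable.aestronglyMeasurable
    fun_prop
  rw [integral_eq_lintegral_of_nonneg_ae hnn hmeas, hlint]
  simp
end

section
/- Let (s₁, s₂) have joint density ℓ(s₁, s₂) = (1/(4√(6π))) exp(−(s₁² + s₂² + s₁s₂)/6) s₁ s₂ (s₁ + s₂) on [0,∞)². Then s = s₁ + s₂ has probability density f₃(s) = (s/4) e^{−s²/8} [ (2Φ(s/(2√3)) − 1)(s²/4 − 3) + (3s/√(6π)) e^{−s²/24} ] for s ≥ 0, where Φ denotes the standard normal cumulative distribution function. -/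
open MeasureTheory ProbabilityTheory

/-- The standard normal cumulative distribution function `Φ`. -/
noncomputable def stdNormalCDF (x : ℝ) : ℝ :=
  ((gaussianReal 0 1) (Set.Iic x)).toReal

section AuxGOE
open Real Set
open scoped ENNReal NNReal

lemma phi_eq : gaussianPDFReal 0 1 = fun x => (Real.sqrt (2*π))⁻¹ * rexp (-x^2/2) := by
  ext x; simp [gaussianPDFReal]

lemma stdNormalCDF_eq (b : ℝ) :
    stdNormalCDF b = ∫ x in Iic b, (Real.sqrt (2*π))⁻¹ * rexp (-x^2/2) := by
  rw [stdNormalCDF, gaussianReal_apply_eq_integral 0 one_ne_zero (Iic b),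
    ENNReal.toReal_ofReal, phi_eq]
  rw [phi_eq]
  exact setIntegral_nonneg measurableSet_Iic fun x _ => by positivity

lemma phi_integrable : Integrable (fun x : ℝ => (Real.sqrt (2*π))⁻¹ * rexp (-x^2/2)) := by
  rw [← phi_eq]; exact integrable_gaussianPDFReal 0 1

lemma phi_total : ∫ x : ℝ, (Real.sqrt (2*π))⁻¹ * rexp (-x^2/2) = 1 := by
  rw [← phi_eq]; exact integral_gaussianPDFReal_eq_one 0 one_ne_zero

lemma stdNormalCDF_neg (b : ℝ) : stdNormalCDF (-b) = 1 - stdNormalCDF b := by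
  have heven : ∀ x : ℝ, (Real.sqrt (2*π))⁻¹ * rexp (-(-x)^2/2)
      = (Real.sqrt (2*π))⁻¹ * rexp (-x^2/2) := by intro x; ring_nf
  have h1 : stdNormalCDF (-b) = ∫ x in Ioi b, (Real.sqrt (2*π))⁻¹ * rexp (-x^2/2) := by
    rw [stdNormalCDF_eq]
    calc ∫ x in Iic (-b), (Real.sqrt (2*π))⁻¹ * rexp (-x^2/2)
        = ∫ x in Iic (-b), (Real.sqrt (2*π))⁻¹ * rexp (-(-x)^2/2) :=
          (setIntegral_congr_fun measurableSet_Iic fun x _ => (heven x).symm)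
      _ = ∫ x in Ioi b, (Real.sqrt (2*π))⁻¹ * rexp (-x^2/2) := by
          rw [integral_comp_neg_Iic (-b) (fun x => (Real.sqrt (2*π))⁻¹ * rexp (-x^2/2)), neg_neg]
  have h2 := integral_add_compl (s := Iic b) measurableSet_Iic phi_integrable
  rw [compl_Iic, phi_total] at h2
  rw [← stdNormalCDF_eq, ← h1] at h2
  linarith

lemma interval_phi (b : ℝ) :
    ∫ x in (-b)..b, rexp (-x^2/2) = Real.sqrt (2*π) * (2 * stdNormalCDF b - 1) := by
  have h := intervalIntegral.integral_Iic_sub_Iic (μ := volume) (a := -b) (b := b)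
    (f := fun x : ℝ => (Real.sqrt (2*π))⁻¹ * rexp (-x^2/2))
    phi_integrable.integrableOn phi_integrable.integrableOn
  rw [← stdNormalCDF_eq, ← stdNormalCDF_eq, stdNormalCDF_neg] at h
  have h2 : ∫ x in (-b)..b, (Real.sqrt (2*π))⁻¹ * rexp (-x^2/2)
      = (Real.sqrt (2*π))⁻¹ * ∫ x in (-b)..b, rexp (-x^2/2) :=
    intervalIntegral.integral_const_mul _ _
  have hs : Real.sqrt (2*π) ≠ 0 := by positivity
  rw [h2] at h
  field_simp at h ⊢
  linarith

lemma G_eq (s : ℝ) :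
    ∫ v in (-(s/2))..(s/2), rexp (-v^2/6)
      = Real.sqrt (6*π) * (2 * stdNormalCDF (s/(2*Real.sqrt 3)) - 1) := by
  have h3 : (0:ℝ) < Real.sqrt 3 := by positivity
  set b0 := s/(2*Real.sqrt 3) with hb0
  have key : ∀ x : ℝ, rexp (-(Real.sqrt 3 * x)^2/6) = rexp (-x^2/2) := by
    intro x
    congr 1
    rw [mul_pow, Real.sq_sqrt (by norm_num : (0:ℝ) ≤ 3)]
    ring
  have hsub := intervalIntegral.integral_comp_mul_left (a := -b0) (b := b0)
    (fun v => rexp (-v^2/6)) (ne_of_gt h3)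
  rw [show Real.sqrt 3 * -b0 = -(s/2) by rw [hb0]; field_simp,
      show Real.sqrt 3 * b0 = s/2 by rw [hb0]; field_simp] at hsub
  simp only [key] at hsub
  rw [interval_phi b0, smul_eq_mul] at hsub
  have h6 : Real.sqrt (6*π) = Real.sqrt 3 * Real.sqrt (2*π) := by
    rw [show (6:ℝ)*π = 3*(2*π) by ring, Real.sqrt_mul (by norm_num : (0:ℝ) ≤ 3)]
  rw [h6]
  field_simp at hsub ⊢
  linarith

lemma K_eq (s : ℝ) :
    ∫ v in (-(s/2))..(s/2), v^2 * rexp (-v^2/6)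
      = 3 * (∫ v in (-(s/2))..(s/2), rexp (-v^2/6)) - 3 * s * rexp (-s^2/24) := by
  have hd : ∀ v : ℝ, HasDerivAt (fun v : ℝ => -3*v*rexp (-v^2/6))
      ((v^2-3) * rexp (-v^2/6)) v := by
    intro v
    have h1 : HasDerivAt (fun v : ℝ => -v^2/6) (-v/3) v := by
      have := ((hasDerivAt_pow 2 v).neg).div_const 6
      exact this.congr_deriv (by push_cast; ring)
    have h3 := (HasDerivAt.const_mul (-3 : ℝ)
      (hasDerivAt_id' v)).mul h1.exp
    exact h3.congr_deriv (by ring)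
  have hc : Continuous fun v : ℝ => (v^2-3)*rexp (-v^2/6) := by continuity
  have hc1 : Continuous fun v : ℝ => v^2 * rexp (-v^2/6) := by continuity
  have hc2 : Continuous fun v : ℝ => rexp (-v^2/6) := by continuity
  have hfd := intervalIntegral.integral_eq_sub_of_hasDerivAt (a := -(s/2)) (b := s/2)
    (fun v _ => hd v) (hc.intervalIntegrable _ _)
  have hsplit : ∫ v in (-(s/2))..(s/2), (v^2-3)*rexp (-v^2/6)
      = (∫ v in (-(s/2))..(s/2), v^2*rexp (-v^2/6))
        - 3* ∫ v in (-(s/2))..(s/2), rexp (-v^2/6) := by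
    rw [← intervalIntegral.integral_const_mul,
      ← intervalIntegral.integral_sub (hc1.intervalIntegrable _ _)
        ((show Continuous fun v : ℝ => 3 * rexp (-v^2/6) from continuous_const.mul hc2).intervalIntegrable _ _)]
    congr 1; funext v; ring
  have e1 : -(s/2)^2/6 = -s^2/24 := by ring
  have e2 : -(-(s/2))^2/6 = -s^2/24 := by ring
  rw [e1, e2] at hfd
  rw [hsplit] at hfd
  have : (-3*(s/2)*rexp (-s^2/24)) - (-3*(-(s/2))*rexp (-s^2/24)) = -3*s*rexp (-s^2/24) := by
    ring
  linarith

lemma J_eq (s : ℝ) :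
    ∫ x in (0:ℝ)..s, x*(s-x)*rexp (x*(s-x)/6)
      = rexp (s^2/24) * ((s^2/4) * (∫ v in (-(s/2))..(s/2), rexp (-v^2/6))
          - ∫ v in (-(s/2))..(s/2), v^2 * rexp (-v^2/6)) := by
  have hcs := intervalIntegral.integral_comp_add_right (a := -(s/2)) (b := s/2)
    (fun x => x*(s-x)*rexp (x*(s-x)/6)) (s/2)
  rw [show -(s/2)+s/2 = (0:ℝ) by ring, show s/2+s/2 = s by ring] at hcs
  have hpt : ∀ v : ℝ, (v+s/2)*(s-(v+s/2))*rexp ((v+s/2)*(s-(v+s/2))/6)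
      = rexp (s^2/24) * ((s^2/4)*rexp (-v^2/6) - v^2*rexp (-v^2/6)) := by
    intro v
    rw [show (v+s/2)*(s-(v+s/2)) = s^2/4 - v^2 by ring,
      show (s^2/4 - v^2)/6 = s^2/24 + -v^2/6 by ring, Real.exp_add]
    ring
  have hc2 : Continuous fun v : ℝ => rexp (-v^2/6) := by continuity
  have hc1 : Continuous fun v : ℝ => v^2 * rexp (-v^2/6) := by continuity
  calc ∫ x in (0:ℝ)..s, x*(s-x)*rexp (x*(s-x)/6)
      = ∫ v in (-(s/2))..(s/2), (v+s/2)*(s-(v+s/2))*rexp ((v+s/2)*(s-(v+s/2))/6) := hcs.symm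
    _ = ∫ v in (-(s/2))..(s/2),
          rexp (s^2/24) * ((s^2/4)*rexp (-v^2/6) - v^2*rexp (-v^2/6)) := by
        simp only [hpt]
    _ = rexp (s^2/24) * ∫ v in (-(s/2))..(s/2),
          ((s^2/4)*rexp (-v^2/6) - v^2*rexp (-v^2/6)) :=
        intervalIntegral.integral_const_mul _ _
    _ = rexp (s^2/24) * ((s^2/4) * (∫ v in (-(s/2))..(s/2), rexp (-v^2/6))
          - ∫ v in (-(s/2))..(s/2), v^2 * rexp (-v^2/6)) := by
        rw [intervalIntegral.integral_sub ((show Continuous fun v : ℝ => s^2/4 * rexp (-v^2/6) from continuous_const.mul hc2).intervalIntegrable _ _)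
          (hc1.intervalIntegrable _ _), intervalIntegral.integral_const_mul]

lemma real_int (s : ℝ) :
    ∫ x in (0:ℝ)..s, (1/(4*Real.sqrt (6*π))) * rexp (-(x^2+(s-x)^2+x*(s-x))/6)
        * (x*(s-x)*(x+(s-x)))
      = s/4 * rexp (-s^2/8) * ((2*stdNormalCDF (s/(2*Real.sqrt 3)) - 1)*(s^2/4-3)
          + 3*s/Real.sqrt (6*π) * rexp (-s^2/24)) := by
  have hpt : ∀ x : ℝ, (1/(4*Real.sqrt (6*π))) * rexp (-(x^2+(s-x)^2+x*(s-x))/6)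
        * (x*(s-x)*(x+(s-x)))
      = ((1/(4*Real.sqrt (6*π))) * s * rexp (-s^2/6)) * (x*(s-x)*rexp (x*(s-x)/6)) := by
    intro x
    rw [show -(x^2+(s-x)^2+x*(s-x))/6 = -s^2/6 + x*(s-x)/6 by ring, Real.exp_add]
    ring
  simp only [hpt]
  rw [intervalIntegral.integral_const_mul, J_eq, K_eq, G_eq]
  have hu : rexp (-s^2/24) ≠ 0 := Real.exp_ne_zero _
  have hr : Real.sqrt (6*π) ≠ 0 := by positivity
  have h6 : rexp (-s^2/6) = (rexp (-s^2/24))^4 := by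
    rw [← Real.exp_nat_mul]; congr 1; push_cast; ring
  have h8 : rexp (-s^2/8) = (rexp (-s^2/24))^3 := by
    rw [← Real.exp_nat_mul]; congr 1; push_cast; ring
  have hbinv : rexp (s^2/24) = (rexp (-s^2/24))⁻¹ := by
    rw [← Real.exp_neg]; congr 1; ring
  rw [h6, h8, hbinv]
  field_simp
  ring

lemma pointwise_density (s : ℝ) :
    (∫⁻ x : ℝ, ENNReal.ofReal (if 0 ≤ x ∧ 0 ≤ s - x then
        (1/(4*Real.sqrt (6*π))) * rexp (-(x^2+(s-x)^2+x*(s-x))/6) * (x*(s-x)*(x+(s-x)))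
      else 0))
      = ENNReal.ofReal (if 0 ≤ s then
          s/4 * rexp (-s^2/8) * ((2*stdNormalCDF (s/(2*Real.sqrt 3)) - 1)*(s^2/4-3)
            + 3*s/Real.sqrt (6*π) * rexp (-s^2/24)) else 0) := by
  by_cases hs : 0 ≤ s
  · rw [if_pos hs]
    set h : ℝ → ℝ := fun x =>
      (1/(4*Real.sqrt (6*π))) * rexp (-(x^2+(s-x)^2+x*(s-x))/6) * (x*(s-x)*(x+(s-x))) with hh
    have hfun : ∀ x : ℝ, (if 0 ≤ x ∧ 0 ≤ s - x then
        (1/(4*Real.sqrt (6*π))) * rexp (-(x^2+(s-x)^2+x*(s-x))/6) * (x*(s-x)*(x+(s-x)))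
      else 0) = (Icc 0 s).indicator h x := by
      intro x
      rw [Set.indicator_apply]
      exact if_congr (by rw [mem_Icc, sub_nonneg]) rfl rfl
    have hcont : Continuous h := by rw [hh]; fun_prop
    have hInt : Integrable ((Icc 0 s).indicator h) :=
      (hcont.integrableOn_Icc).integrable_indicator measurableSet_Icc
    have hnn : ∀ x, 0 ≤ (Icc 0 s).indicator h x := by
      refine fun x => Set.indicator_nonneg (fun y hy => ?_) x
      rw [mem_Icc] at hy
      have h1 : (0:ℝ) ≤ 1/(4*Real.sqrt (6*π)) := by positivity
      have h2 : (0:ℝ) ≤ y*(s-y)*(y+(s-y)) :=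
        mul_nonneg (mul_nonneg hy.1 (by linarith)) (by linarith)
      exact mul_nonneg (mul_nonneg h1 (Real.exp_pos _).le) h2
    simp only [hfun]
    rw [← ofReal_integral_eq_lintegral_ofReal hInt (ae_of_all _ hnn)]
    congr 1
    rw [integral_indicator measurableSet_Icc, integral_Icc_eq_integral_Ioc,
      ← intervalIntegral.integral_of_le hs]
    exact real_int s
  · rw [if_neg hs]
    have hfun : ∀ x : ℝ, (if 0 ≤ x ∧ 0 ≤ s - x then
        (1/(4*Real.sqrt (6*π))) * rexp (-(x^2+(s-x)^2+x*(s-x))/6) * (x*(s-x)*(x+(s-x)))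
      else 0) = (0:ℝ) := by
      intro x
      refine if_neg ?_
      rintro ⟨h1, h2⟩
      exact hs (by linarith)
    simp only [hfun, ENNReal.ofReal_zero, lintegral_zero]

lemma map_add_withDensity (f : ℝ × ℝ → ℝ≥0∞) (hf : Measurable f) :
    Measure.map (fun p : ℝ × ℝ => p.1 + p.2) ((volume : Measure (ℝ×ℝ)).withDensity f) =
      (volume : Measure ℝ).withDensity (fun s => ∫⁻ x, f (x, s - x)) := by
  have hadd : Measurable fun p : ℝ × ℝ => p.1 + p.2 := measurable_fst.add measurable_snd
  ext A hA
  rw [Measure.map_apply hadd hA, withDensity_apply _ (hadd hA), withDensity_apply _ hA]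
  have hT : MeasurePreserving (fun z : ℝ×ℝ => (z.1, z.2 - z.1))
      ((volume : Measure ℝ).prod volume) ((volume : Measure ℝ).prod volume) :=
    measurePreserving_prod_sub volume volume
  have hg : Measurable (((fun p : ℝ×ℝ => p.1+p.2) ⁻¹' A).indicator f) :=
    hf.indicator (hadd hA)
  have h2 : Measurable fun z : ℝ×ℝ => f (z.1, z.2 - z.1) :=
    hf.comp (measurable_fst.prodMk (measurable_snd.sub measurable_fst))
  calc ∫⁻ p in (fun p : ℝ×ℝ => p.1+p.2) ⁻¹' A, f p
      = ∫⁻ p, ((fun p : ℝ×ℝ => p.1+p.2) ⁻¹' A).indicator f p := by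
        rw [lintegral_indicator (hadd hA)]
    _ = ∫⁻ z, ((fun p : ℝ×ℝ => p.1+p.2) ⁻¹' A).indicator f (z.1, z.2 - z.1)
        ∂((volume : Measure ℝ).prod volume) := by
        rw [Measure.volume_eq_prod]
        exact (hT.lintegral_comp hg).symm
    _ = ∫⁻ z, ((Prod.snd ⁻¹' A : Set (ℝ×ℝ)).indicator (fun z : ℝ×ℝ => f (z.1, z.2 - z.1))) z
        ∂((volume : Measure ℝ).prod volume) := by
        congr 1
        funext z
        classical
        have hz : z.1 + (z.2 - z.1) = z.2 := by ring
        rw [Set.indicator_apply, Set.indicator_apply, Set.mem_preimage, Set.mem_preimage]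
        simp only [hz]
    _ = ∫⁻ s, ∫⁻ x, ((Prod.snd ⁻¹' A : Set (ℝ×ℝ)).indicator
          (fun z : ℝ×ℝ => f (z.1, z.2 - z.1))) (x, s) := by
        rw [lintegral_prod_symm' _ (h2.indicator (measurable_snd hA))]
    _ = ∫⁻ s, A.indicator (fun s => ∫⁻ x, f (x, s - x)) s := by
        congr 1
        funext s
        by_cases hsA : s ∈ A
        · simp [Set.indicator_apply, Set.mem_preimage, hsA]
        · simp [Set.indicator_apply, Set.mem_preimage, hsA]
    _ = ∫⁻ s in A, ∫⁻ x, f (x, s - x) := lintegral_indicator hA _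

end AuxGOE

/-- if `(s₁, s₂)` has the GOE(3) spacings density
`ℓ(s₁,s₂) = (1/(4√(6π))) exp(-(s₁²+s₂²+s₁s₂)/6) s₁s₂(s₁+s₂)` on `[0,∞)²`, then
`s = s₁ + s₂` has density
`f₃(s) = (s/4) e^{-s²/8} [(2Φ(s/(2√3)) - 1)(s²/4 - 3) + (3s/√(6π)) e^{-s²/24}]`
on `s ≥ 0`, where `Φ` is the standard normal cdf. -/
theorem stmt_17 {Ω : Type*} [MeasurableSpace Ω] (P0 : Measure Ω) [IsProbabilityMeasure P0]
    (S : Ω → ℝ × ℝ) (hSmeas : Measurable S)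
    (hlaw : Measure.map S P0 =
      (volume : Measure (ℝ × ℝ)).withDensity
        (fun p => ENNReal.ofReal
          (if 0 ≤ p.1 ∧ 0 ≤ p.2 then
            (1 / (4 * Real.sqrt (6 * Real.pi))) *
              Real.exp (-(p.1 ^ 2 + p.2 ^ 2 + p.1 * p.2) / 6) *
              (p.1 * p.2 * (p.1 + p.2))
          else 0))) :
    Measure.map (fun ω => (S ω).1 + (S ω).2) P0 =
      (volume : Measure ℝ).withDensity
        (fun s => ENNReal.ofReal
          (if 0 ≤ s then
            s / 4 * Real.exp (-s ^ 2 / 8) *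
              ((2 * stdNormalCDF (s / (2 * Real.sqrt 3)) - 1) * (s ^ 2 / 4 - 3) +
                3 * s / Real.sqrt (6 * Real.pi) * Real.exp (-s ^ 2 / 24))
          else 0)) := by
  have hadd : Measurable fun p : ℝ × ℝ => p.1 + p.2 := measurable_fst.add measurable_snd
  have hset : MeasurableSet {p : ℝ × ℝ | 0 ≤ p.1 ∧ 0 ≤ p.2} :=
    (measurableSet_le measurable_const measurable_fst).inter
      (measurableSet_le measurable_const measurable_snd)
  have hcont : Continuous fun p : ℝ × ℝ =>
      (1 / (4 * Real.sqrt (6 * Real.pi))) *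
        Real.exp (-(p.1 ^ 2 + p.2 ^ 2 + p.1 * p.2) / 6) * (p.1 * p.2 * (p.1 + p.2)) := by
    fun_prop
  have hmeas : Measurable fun p : ℝ × ℝ => ENNReal.ofReal
      (if 0 ≤ p.1 ∧ 0 ≤ p.2 then
        (1 / (4 * Real.sqrt (6 * Real.pi))) *
          Real.exp (-(p.1 ^ 2 + p.2 ^ 2 + p.1 * p.2) / 6) *
          (p.1 * p.2 * (p.1 + p.2))
      else 0) :=
    (Measurable.ite hset hcont.measurable measurable_const).ennreal_ofReal
  have hco : (fun ω => (S ω).1 + (S ω).2) = (fun p : ℝ × ℝ => p.1 + p.2) ∘ S := rfl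
  rw [hco, ← Measure.map_map hadd hSmeas, hlaw, map_add_withDensity _ hmeas]
  congr 1
  funext s
  exact pointwise_density s
end
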